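/- Let k be a field and A a finite-dimensional k-algebra. (a) A torsion class T in mod A is compact in the complete lattice of torsion classes — meaning that whenever T is contained in the smallest torsion class containing the union of a family 𝒮 of torsion classes, there is a finite subfamily F ⊆ 𝒮 with T contained in the smallest torsion class containing the union of F — if and only if T = T(X), the smallest torsion class containing X, for some finitely generated A-module X. (b) A torsion class T is co-compact — meaning that whenever ⋂𝒮 ⊆ T for a family 𝒮 of torsion classes, there is a finite subfamily F ⊆ 𝒮 with ⋂F ⊆ T — if and only if T = ⊥X := { Y ∈ mod A | Hom_A(Y, X) = 0 } for some finitely generated A-module X. -/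

import Mathlib

universe u

/-- A torsion class in the category `mod A` of finitely generated `A`-modules:
a class of finitely generated modules, containing the zero modules, closed under
isomorphism, images of surjective homomorphisms (factor modules) and extensions. -/
def IsTorsionClass (A : Type u) [Ring A] (T : Set (ModuleCat.{u} A)) : Prop :=
  (∀ M ∈ T, Module.Finite A M) ∧
  (∀ M : ModuleCat.{u} A, Subsingleton M → M ∈ T) ∧
  (∀ M N : ModuleCat.{u} A, M ∈ T → Nonempty (M ≃ₗ[A] N) → N ∈ T) ∧
  (∀ (M N : ModuleCat.{u} A) (f : M →ₗ[A] N), Function.Surjective f → M ∈ T → N ∈ T) ∧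
  (∀ (M : ModuleCat.{u} A) (S : Submodule A M),
     ModuleCat.of A S ∈ T → ModuleCat.of A (M ⧸ S) ∈ T → M ∈ T)

/-- The smallest torsion class containing a class `C` of modules: the intersection of
all torsion classes containing `C`. -/
def torsGen (A : Type u) [Ring A] (C : Set (ModuleCat.{u} A)) : Set (ModuleCat.{u} A) :=
  ⋂₀ {T | IsTorsionClass A T ∧ C ⊆ T}

/-- A brick: a nonzero finitely generated module all of whose nonzero endomorphisms are
invertible. -/
def IsBrick (A : Type u) [Ring A] (S : ModuleCat.{u} A) : Prop :=
  Nontrivial S ∧ Module.Finite A S ∧ ∀ f : S →ₗ[A] S, f ≠ 0 → Function.Bijective f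

namespace TorsAuxPf

variable {A : Type u} [Ring A]

theorem finite_of_subsingleton (M : Type u) [AddCommGroup M] [Module A M] [Subsingleton M] :
    Module.Finite A M :=
  Module.Finite.of_surjective (0 : (A →ₗ[A] M)) (fun m => ⟨0, Subsingleton.elim _ _⟩)

theorem finite_of_ext (M : Type u) [AddCommGroup M] [Module A M] (S : Submodule A M)
    (h1 : Module.Finite A S) (h2 : Module.Finite A (M ⧸ S)) : Module.Finite A M := by
  rw [Module.finite_def]
  apply Submodule.fg_of_fg_map_of_fg_inf_ker S.mkQ
  · rw [Submodule.map_top, Submodule.range_mkQ]; exact Module.finite_def.mp h2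
  · rw [top_inf_eq, Submodule.ker_mkQ]; exact (Submodule.fg_top S).mp (Module.finite_def.mp h1)

/-- The class of all finite modules is a torsion class. -/
theorem finClass_tc : IsTorsionClass A {M : ModuleCat.{u} A | Module.Finite A M} := by
  refine ⟨fun M hM => hM, fun M hM => ?_, fun M N hM ⟨e⟩ => ?_, fun M N f hf hM => ?_,
    fun M S hS hQ => ?_⟩
  · exact finite_of_subsingleton M
  · haveI : Module.Finite A M := hM; exact Module.Finite.equiv e
  · haveI : Module.Finite A M := hM; exact Module.Finite.of_surjective f hf
  · exact finite_of_ext M S hS hQ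

/-- The intersection of a nonempty family of torsion classes is a torsion class. -/
theorem sInter_tc {𝔉 : Set (Set (ModuleCat.{u} A))} (h : ∀ U ∈ 𝔉, IsTorsionClass A U)
    (hne : 𝔉.Nonempty) : IsTorsionClass A (⋂₀ 𝔉) := by
  refine ⟨fun M hM => ?_, fun M hM U hU => (h U hU).2.1 M hM,
    fun M N hM he U hU => (h U hU).2.2.1 M N (hM U hU) he,
    fun M N f hf hM U hU => (h U hU).2.2.2.1 M N f hf (hM U hU),
    fun M S hS hQ U hU => (h U hU).2.2.2.2 M S (hS U hU) (hQ U hU)⟩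
  obtain ⟨U, hU⟩ := hne
  exact (h U hU).1 M (hM U hU)

theorem subset_torsGen (C : Set (ModuleCat.{u} A)) : C ⊆ torsGen A C :=
  fun _M hM _U hU => hU.2 hM

theorem torsGen_le {C U : Set (ModuleCat.{u} A)} (hU : IsTorsionClass A U) (h : C ⊆ U) :
    torsGen A C ⊆ U :=
  fun _M hM => hM U ⟨hU, h⟩

theorem torsGen_mono {C D : Set (ModuleCat.{u} A)} (h : C ⊆ D) : torsGen A C ⊆ torsGen A D :=
  fun _M hM _U hU => hM _ ⟨hU.1, h.trans hU.2⟩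

theorem torsGen_tc {C : Set (ModuleCat.{u} A)} (hC : ∀ M ∈ C, Module.Finite A M) :
    IsTorsionClass A (torsGen A C) :=
  sInter_tc (fun _U hU => hU.1) ⟨{M : ModuleCat.{u} A | Module.Finite A M}, finClass_tc, hC⟩

/-- Torsion classes are closed under binary products. -/
theorem prodMem {U : Set (ModuleCat.{u} A)} (hU : IsTorsionClass A U) (M N : ModuleCat.{u} A)
    (hM : M ∈ U) (hN : N ∈ U) : ModuleCat.of A (M × N) ∈ U := by
  apply hU.2.2.2.2 (ModuleCat.of A (M × N)) (LinearMap.ker (LinearMap.snd A M N))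
  · exact hU.2.2.1 M _ hM ⟨(LinearEquiv.ofInjective (LinearMap.inl A M N)
      LinearMap.inl_injective).trans (LinearEquiv.ofEq _ _ (LinearMap.range_inl A M N))⟩
  · exact hU.2.2.1 N _ hN ⟨((LinearMap.snd A M N).quotKerEquivOfSurjective
      Prod.snd_surjective).symm⟩

/-- A Noetherian module has a largest submodule belonging to a given torsion class. -/
theorem torsionSub {U : Set (ModuleCat.{u} A)} (hU : IsTorsionClass A U) (X : ModuleCat.{u} A)
    (hnoe : IsNoetherian A X) :
    ∃ t : Submodule A X, ModuleCat.of A t ∈ U ∧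
      ∀ S : Submodule A X, ModuleCat.of A S ∈ U → S ≤ t := by
  obtain ⟨t, ht, htmax⟩ := set_has_maximal_iff_noetherian.mpr hnoe
    {S : Submodule A X | ModuleCat.of A S ∈ U}
    ⟨⊥, hU.2.1 _ (by exact inferInstanceAs (Subsingleton (⊥ : Submodule A X)))⟩
  refine ⟨t, ht, fun S hS => ?_⟩
  have hsup : ModuleCat.of A (↥(t ⊔ S)) ∈ U := by
    have hprod := prodMem hU (ModuleCat.of A t) (ModuleCat.of A S) ht hS
    have hmap := hU.2.2.2.1 _ (ModuleCat.of A (↥(t ⊔ S)))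
      (LinearMap.codRestrict (t ⊔ S) ((t.subtype).coprod S.subtype)
        (fun x => ?_)) ?_ hprod
    · exact hmap
    · have : (t.subtype).coprod S.subtype x ∈ LinearMap.range ((t.subtype).coprod S.subtype) :=
        LinearMap.mem_range_self _ x
      rw [LinearMap.range_coprod, Submodule.range_subtype, Submodule.range_subtype] at this
      exact this
    · rintro ⟨y, hy⟩
      rw [Submodule.mem_sup] at hy
      obtain ⟨a, ha, b, hb, rfl⟩ := hy
      exact ⟨(⟨a, ha⟩, ⟨b, hb⟩), rfl⟩
  have hnotlt := htmax (t ⊔ S) hsup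
  have hle : t ⊔ S ≤ t := by
    by_contra h
    exact hnotlt (lt_of_le_of_ne le_sup_left (fun he => h (he ▸ le_rfl)))
  exact le_trans le_sup_right hle

/-- The class `⊥X` of finite modules with no nonzero homomorphism to `X`. -/
def perp (X : ModuleCat.{u} A) : Set (ModuleCat.{u} A) :=
  {Y : ModuleCat.{u} A | Module.Finite A Y ∧ ∀ f : Y →ₗ[A] X, f = 0}

theorem perp_tc (X : ModuleCat.{u} A) : IsTorsionClass A (perp X) := by
  refine ⟨fun M hM => hM.1, fun M hM => ?_, fun M N hM ⟨e⟩ => ?_, fun M N f hf hM => ?_,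
    fun M S hS hQ => ?_⟩
  · exact ⟨finite_of_subsingleton M, fun f => LinearMap.ext fun y => by
      rw [Subsingleton.elim y (0 : M), map_zero]; rfl⟩
  · haveI := hM.1
    refine ⟨Module.Finite.equiv e, fun f => LinearMap.ext fun n => ?_⟩
    have h := LinearMap.congr_fun (hM.2 (f ∘ₗ (e : M →ₗ[A] N))) (e.symm n)
    simpa using h
  · haveI := hM.1
    refine ⟨Module.Finite.of_surjective f hf, fun g => LinearMap.ext fun n => ?_⟩
    obtain ⟨m, rfl⟩ := hf n
    have h := LinearMap.congr_fun (hM.2 (g ∘ₗ f)) m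
    simpa using h
  · refine ⟨finite_of_ext M S hS.1 hQ.1, fun f => ?_⟩
    have hle : S ≤ LinearMap.ker f := fun x hx => by
      have h := LinearMap.congr_fun (hS.2 (f ∘ₗ S.subtype)) ⟨x, hx⟩
      simpa using h
    have hq := hQ.2 (S.liftQ f hle)
    rw [← S.liftQ_mkQ f hle, hq, LinearMap.zero_comp]

end TorsAuxPf

open TorsAuxPf in
/-- Characterization of compact and co-compact torsion classes:
(a) a torsion class `T` is compact in the lattice of torsion classes iff it is the
smallest torsion class `torsGen A {X}` generated by a single finitely generated
module `X`;
(b) a torsion class `T` is co-compact iff it equals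
`⊥X = { Y | Hom_A(Y, X) = 0 }` for some finitely generated module `X`. -/
theorem tors_compact_cocompact_characterization (k A : Type u) [Field k] [Ring A]
    [Algebra k A] [FiniteDimensional k A]
    (T : Set (ModuleCat.{u} A)) (hT : IsTorsionClass A T) :
    ((∀ 𝒮 : Set (Set (ModuleCat.{u} A)), (∀ U ∈ 𝒮, IsTorsionClass A U) →
        T ⊆ torsGen A (⋃₀ 𝒮) → ∃ F ⊆ 𝒮, F.Finite ∧ T ⊆ torsGen A (⋃₀ F)) ↔
      ∃ X : ModuleCat.{u} A, Module.Finite A X ∧ T = torsGen A {X}) ∧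
    ((∀ 𝒮 : Set (Set (ModuleCat.{u} A)), (∀ U ∈ 𝒮, IsTorsionClass A U) →
        ⋂₀ 𝒮 ⊆ T → ∃ F ⊆ 𝒮, F.Finite ∧ ⋂₀ F ⊆ T) ↔
      ∃ X : ModuleCat.{u} A, Module.Finite A X ∧
        T = {Y : ModuleCat.{u} A | Module.Finite A Y ∧ ∀ f : Y →ₗ[A] X, f = 0}) := by
  haveI hArtRing : IsArtinianRing A := isArtinian_of_tower k inferInstance
  haveI hNoethRing : IsNoetherianRing A := isNoetherian_of_tower k inferInstance
  constructor
  · -- part (a)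
    constructor
    · -- compact → generated by one module
      intro hcomp
      set 𝒮 : Set (Set (ModuleCat.{u} A)) := (fun X : ModuleCat.{u} A => torsGen A {X}) '' T
        with h𝒮def
      have h𝒮 : ∀ U ∈ 𝒮, IsTorsionClass A U := by
        rintro U ⟨X, hX, rfl⟩
        exact torsGen_tc (fun M hM => by rw [show M = X from hM]; exact hT.1 X hX)
      have hTsub : T ⊆ torsGen A (⋃₀ 𝒮) := by
        intro X hX
        exact subset_torsGen _ ⟨torsGen A {X}, ⟨X, hX, rfl⟩, subset_torsGen _ rfl⟩
      obtain ⟨F, hF𝒮, hFfin, hTF⟩ := hcomp 𝒮 h𝒮 hTsub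
      -- find a single module generating a torsion class containing every member of F
      have key : ∀ (G : Set (Set (ModuleCat.{u} A))), G.Finite → G ⊆ 𝒮 →
          ∃ X : ModuleCat.{u} A, X ∈ T ∧ ∀ U ∈ G, U ⊆ torsGen A {X} := by
        intro G hGfin
        refine Set.Finite.induction_on
          (motive := fun G _ => G ⊆ 𝒮 →
            ∃ X : ModuleCat.{u} A, X ∈ T ∧ ∀ U ∈ G, U ⊆ torsGen A {X}) G hGfin ?_ ?_
        · intro _
          refine ⟨ModuleCat.of A PUnit, hT.2.1 _ inferInstance, fun U hU => absurd hU ?_⟩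
          simp
        · intro U G hUG hGfin ih hins
          obtain ⟨X', hX'T, hX'⟩ := ih ((Set.subset_insert U G).trans hins)
          obtain ⟨XU, hXUT, hXUeq⟩ := hins (Set.mem_insert U G)
          refine ⟨ModuleCat.of A (X' × XU), ?_, ?_⟩
          · exact prodMem hT X' XU hX'T hXUT
          · have hfinprod : Module.Finite A (ModuleCat.of A (X' × XU)) := by
              haveI : Module.Finite A X' := hT.1 X' hX'T
              haveI : Module.Finite A XU := hT.1 XU hXUT
              exact Module.Finite.prod
            have htc : IsTorsionClass A (torsGen A {ModuleCat.of A (X' × XU)}) :=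
              torsGen_tc (fun M hM => by
                rw [show M = ModuleCat.of A (X' × XU) from hM]; exact hfinprod)
            have hself : ModuleCat.of A (X' × XU) ∈ torsGen A {ModuleCat.of A (X' × XU)} :=
              subset_torsGen _ rfl
            have hfst : X' ∈ torsGen A {ModuleCat.of A (X' × XU)} :=
              htc.2.2.2.1 _ X' (LinearMap.fst A X' XU) Prod.fst_surjective hself
            have hsnd : XU ∈ torsGen A {ModuleCat.of A (X' × XU)} :=
              htc.2.2.2.1 _ XU (LinearMap.snd A X' XU) Prod.snd_surjective hself
            rintro V hV
            rcases Set.mem_insert_iff.mp hV with rfl | hVG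
            · rw [← hXUeq]
              exact torsGen_le htc (Set.singleton_subset_iff.mpr hsnd)
            · exact (hX' V hVG).trans (torsGen_le htc (Set.singleton_subset_iff.mpr hfst))
      obtain ⟨X, hXT, hX⟩ := key F hFfin hF𝒮
      refine ⟨X, hT.1 X hXT, Set.Subset.antisymm ?_ ?_⟩
      · refine hTF.trans (torsGen_le (torsGen_tc (fun M hM => by rw [show M = X from hM]; exact hT.1 X hXT)) ?_)
        rintro M ⟨U, hU, hMU⟩
        exact hX U hU hMU
      · exact torsGen_le hT (Set.singleton_subset_iff.mpr hXT)
    · -- generated by one module → compact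
      rintro ⟨X, hXfin, rfl⟩ 𝒮 h𝒮 hsub
      set W : Set (ModuleCat.{u} A) :=
        {M | ∃ F, F ⊆ 𝒮 ∧ F.Finite ∧ M ∈ torsGen A (⋃₀ F)} with hWdef
      have hfinF : ∀ F : Set (Set (ModuleCat.{u} A)), F ⊆ 𝒮 →
          ∀ M ∈ (⋃₀ F), Module.Finite A M := by
        rintro F hF M ⟨U, hU, hMU⟩
        exact (h𝒮 U (hF hU)).1 M hMU
      have hWtc : IsTorsionClass A W := by
        refine ⟨?_, ?_, ?_, ?_, ?_⟩
        · rintro M ⟨F, hF, hFfin, hM⟩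
          exact (torsGen_tc (hfinF F hF)).1 M hM
        · intro M hM
          exact ⟨∅, Set.empty_subset _, Set.finite_empty,
            (torsGen_tc (by simp)).2.1 M hM⟩
        · rintro M N ⟨F, hF, hFfin, hM⟩ he
          exact ⟨F, hF, hFfin, (torsGen_tc (hfinF F hF)).2.2.1 M N hM he⟩
        · rintro M N f hf ⟨F, hF, hFfin, hM⟩
          exact ⟨F, hF, hFfin, (torsGen_tc (hfinF F hF)).2.2.2.1 M N f hf hM⟩
        · rintro M S ⟨F1, hF1, hF1fin, hS⟩ ⟨F2, hF2, hF2fin, hQ⟩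
          refine ⟨F1 ∪ F2, Set.union_subset hF1 hF2, hF1fin.union hF2fin, ?_⟩
          refine (torsGen_tc (hfinF _ (Set.union_subset hF1 hF2))).2.2.2.2 M S ?_ ?_
          · exact torsGen_mono (Set.sUnion_mono Set.subset_union_left) hS
          · exact torsGen_mono (Set.sUnion_mono Set.subset_union_right) hQ
      have hUW : ⋃₀ 𝒮 ⊆ W := by
        rintro M ⟨U, hU, hMU⟩
        exact ⟨{U}, Set.singleton_subset_iff.mpr hU, Set.finite_singleton U,
          subset_torsGen _ (by simpa using hMU)⟩
      have hXW : X ∈ W := torsGen_le hWtc hUW (hsub (subset_torsGen _ rfl))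
      obtain ⟨F, hF, hFfin, hXF⟩ := hXW
      exact ⟨F, hF, hFfin, torsGen_le (torsGen_tc (hfinF F hF))
        (Set.singleton_subset_iff.mpr hXF)⟩
  · -- part (b)
    constructor
    · -- co-compact → perpendicular of one module
      intro hcc
      set Fcl : Set (ModuleCat.{u} A) :=
        {X | Module.Finite A X ∧ ∀ Y ∈ T, ∀ f : Y →ₗ[A] X, f = 0} with hFcldef
      have hPUnit : ModuleCat.of A PUnit ∈ Fcl :=
        ⟨finite_of_subsingleton _, fun Y _ f => LinearMap.ext fun y => Subsingleton.elim _ _⟩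
      set 𝒮 : Set (Set (ModuleCat.{u} A)) := perp '' Fcl with h𝒮def
      have h𝒮 : ∀ U ∈ 𝒮, IsTorsionClass A U := by
        rintro U ⟨X, _, rfl⟩; exact perp_tc X
      have hsub : ⋂₀ 𝒮 ⊆ T := by
        intro Y hY
        have hYfin : Module.Finite A Y :=
          (hY (perp (ModuleCat.of A PUnit)) ⟨_, hPUnit, rfl⟩).1
        haveI : Module.Finite A Y := hYfin
        haveI : IsNoetherian A Y := inferInstance
        obtain ⟨t, htT, htmax⟩ := torsionSub hT Y inferInstance
        -- the quotient Y/t lies in the torsion-free class Fcl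
        have hquot : ModuleCat.of A ((Y : Type u) ⧸ t) ∈ Fcl := by
          refine ⟨Module.Finite.quotient A t, fun Z hZ g => ?_⟩
          set P : Submodule A Y := Submodule.comap t.mkQ (LinearMap.range g) with hPdef
          have htleP : t ≤ P := fun x hx => by
            have h0 : t.mkQ x = 0 := by
              rw [Submodule.mkQ_apply]; exact (Submodule.Quotient.mk_eq_zero t).mpr hx
            show t.mkQ x ∈ LinearMap.range g
            rw [h0]; exact ⟨0, map_zero g⟩
          have hrange : ModuleCat.of A (LinearMap.range g) ∈ T :=
            hT.2.2.2.1 Z (ModuleCat.of A (LinearMap.range g)) g.rangeRestrict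
              g.surjective_rangeRestrict hZ
          -- P is an extension of t by (range g), hence P ∈ T
          have hPT : ModuleCat.of A P ∈ T := by
            set S' : Submodule A (ModuleCat.of A P) := Submodule.comap P.subtype t with hS'def
            have hS'T : ModuleCat.of A S' ∈ T :=
              hT.2.2.1 (ModuleCat.of A t) _ htT ⟨(Submodule.comapSubtypeEquivOfLe htleP).symm⟩
            -- the map P → range g induced by mkQ
            have hmem : ∀ x : P, t.mkQ x.1 ∈ LinearMap.range g := fun x => x.2
            set φ : (ModuleCat.of A P : Type u) →ₗ[A] (LinearMap.range g : Submodule A _) :=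
              LinearMap.codRestrict (LinearMap.range g) (t.mkQ ∘ₗ P.subtype) hmem with hφdef
            have hφsurj : Function.Surjective φ := by
              rintro ⟨v, hv⟩
              obtain ⟨y, rfl⟩ := t.mkQ_surjective v
              refine ⟨⟨y, hv⟩, ?_⟩
              apply Subtype.ext
              rfl
            have hker : LinearMap.ker φ = S' := by
              ext x
              constructor
              · intro hx
                have h0 : t.mkQ x.1 = 0 :=
                  congrArg Subtype.val (LinearMap.mem_ker.mp hx)
                show x.1 ∈ t
                rw [Submodule.mkQ_apply] at h0
                exact (Submodule.Quotient.mk_eq_zero t).mp h0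
              · intro hx
                have hx' : x.1 ∈ t := hx
                apply LinearMap.mem_ker.mpr
                apply Subtype.ext
                show t.mkQ x.1 = 0
                rw [Submodule.mkQ_apply]
                exact (Submodule.Quotient.mk_eq_zero t).mpr hx'
            have hquotT : ModuleCat.of A ((ModuleCat.of A P : Type u) ⧸ S') ∈ T := by
              refine hT.2.2.1 (ModuleCat.of A (LinearMap.range g)) _ hrange ?_
              exact ⟨((Submodule.quotEquivOfEq S' (LinearMap.ker φ) hker.symm).trans
                (φ.quotKerEquivOfSurjective hφsurj)).symm⟩
            exact hT.2.2.2.2 (ModuleCat.of A P) S' hS'T hquotT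
          have hPle : P ≤ t := htmax P hPT
          -- hence range g = 0
          apply LinearMap.ext
          intro z
          obtain ⟨y, hy⟩ := t.mkQ_surjective (g z)
          have hyP : y ∈ P := by
            show t.mkQ y ∈ LinearMap.range g
            rw [hy]; exact ⟨z, rfl⟩
          have hgz : g z = 0 := by
            rw [← hy, Submodule.mkQ_apply]
            exact (Submodule.Quotient.mk_eq_zero t).mpr (hPle hyP)
          simpa using hgz
        -- Y has no nonzero map to Y/t, so t = ⊤
        have hperp := hY (perp (ModuleCat.of A ((Y : Type u) ⧸ t))) ⟨_, hquot, rfl⟩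
        have hmkQ : t.mkQ = 0 := hperp.2 t.mkQ
        have htop : t = ⊤ := by
          rw [eq_top_iff]
          intro y _
          have : t.mkQ y = 0 := by rw [hmkQ]; rfl
          exact (Submodule.Quotient.mk_eq_zero t).mp (by simpa using this)
        subst htop
        exact hT.2.2.1 (ModuleCat.of A (⊤ : Submodule A Y)) Y htT ⟨Submodule.topEquiv⟩
      obtain ⟨F₀, hF₀𝒮, hF₀fin, hF₀T⟩ := hcc 𝒮 h𝒮 hsub
      -- a single module X with perp X ⊆ ⋂₀ F₀
      have key : ∀ (G : Set (Set (ModuleCat.{u} A))), G.Finite → G ⊆ 𝒮 →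
          ∃ X : ModuleCat.{u} A, X ∈ Fcl ∧ ∀ U ∈ G, perp X ⊆ U := by
        intro G hGfin
        refine Set.Finite.induction_on
          (motive := fun G _ => G ⊆ 𝒮 →
            ∃ X : ModuleCat.{u} A, X ∈ Fcl ∧ ∀ U ∈ G, perp X ⊆ U) G hGfin ?_ ?_
        · intro _
          refine ⟨ModuleCat.of A PUnit, hPUnit, fun U hU => absurd hU ?_⟩
          simp
        · intro U G hUG hGfin ih hins
          obtain ⟨X', hX'F, hX'⟩ := ih ((Set.subset_insert U G).trans hins)
          obtain ⟨XU, hXUF, hXUeq⟩ := hins (Set.mem_insert U G)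
          refine ⟨ModuleCat.of A (X' × XU), ⟨?_, ?_⟩, ?_⟩
          · haveI : Module.Finite A X' := hX'F.1
            haveI : Module.Finite A XU := hXUF.1
            exact Module.Finite.prod
          · intro Y hY f
            apply LinearMap.ext
            intro y
            have h1 := LinearMap.congr_fun (hX'F.2 Y hY ((LinearMap.fst A X' XU) ∘ₗ f)) y
            have h2 := LinearMap.congr_fun (hXUF.2 Y hY ((LinearMap.snd A X' XU) ∘ₗ f)) y
            simp only [LinearMap.comp_apply, LinearMap.zero_apply] at h1 h2
            exact Prod.ext h1 h2
          · have hperpX' : perp (ModuleCat.of A (X' × XU)) ⊆ perp X' := by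
              rintro Y ⟨hYfin, hY⟩
              refine ⟨hYfin, fun g => ?_⟩
              have h := hY ((LinearMap.inl A X' XU) ∘ₗ g)
              apply LinearMap.ext
              intro y
              have := congrArg Prod.fst (LinearMap.congr_fun h y)
              simpa using this
            have hperpXU : perp (ModuleCat.of A (X' × XU)) ⊆ perp XU := by
              rintro Y ⟨hYfin, hY⟩
              refine ⟨hYfin, fun g => ?_⟩
              have h := hY ((LinearMap.inr A X' XU) ∘ₗ g)
              apply LinearMap.ext
              intro y
              have := congrArg Prod.snd (LinearMap.congr_fun h y)
              simpa using this
            rintro V hV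
            rcases Set.mem_insert_iff.mp hV with rfl | hVG
            · rw [← hXUeq]; exact hperpXU
            · exact hperpX'.trans (hX' V hVG)
      obtain ⟨X, hXF, hX⟩ := key F₀ hF₀fin hF₀𝒮
      refine ⟨X, hXF.1, Set.Subset.antisymm ?_ ?_⟩
      · intro Y hY
        exact ⟨hT.1 Y hY, fun f => hXF.2 Y hY f⟩
      · intro Y hY
        exact hF₀T (fun U hU => hX U hU hY)
    · -- perpendicular of one module → co-compact
      rintro ⟨X, hXfin, rfl⟩ 𝒮 h𝒮 hsub
      rcases Set.eq_empty_or_nonempty 𝒮 with rfl | ⟨U₀, hU₀⟩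
      · exact ⟨∅, le_rfl, Set.finite_empty, hsub⟩
      haveI : Module.Finite A X := hXfin
      haveI : IsNoetherian A X := inferInstance
      haveI : IsArtinian A X := inferInstance
      set 𝒜 : Set (Submodule A X) :=
        {S | ∃ F, F.Nonempty ∧ F.Finite ∧ F ⊆ 𝒮 ∧ ModuleCat.of A S ∈ ⋂₀ F ∧
          ∀ S' : Submodule A X, ModuleCat.of A S' ∈ ⋂₀ F → S' ≤ S} with h𝒜def
      have h𝒜ne : 𝒜.Nonempty := by
        obtain ⟨t, ht1, ht2⟩ := torsionSub (sInter_tc (𝔉 := {U₀})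
          (fun U hU => by rw [show U = U₀ from hU]; exact h𝒮 U₀ hU₀) ⟨U₀, rfl⟩) X inferInstance
        exact ⟨t, {U₀}, Set.singleton_nonempty U₀, Set.finite_singleton U₀,
          Set.singleton_subset_iff.mpr hU₀, ht1, ht2⟩
      obtain ⟨S₀, hS₀𝒜, hS₀min⟩ := IsArtinian.set_has_minimal 𝒜 h𝒜ne
      obtain ⟨F₀, hF₀ne, hF₀fin, hF₀𝒮, hS₀mem, hS₀max⟩ := hS₀𝒜
      -- S₀ belongs to every torsion class in 𝒮
      have hS₀all : ∀ U ∈ 𝒮, ModuleCat.of A S₀ ∈ U := by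
        intro U hU
        obtain ⟨t', ht'1, ht'2⟩ := torsionSub (sInter_tc (𝔉 := insert U F₀)
          (fun V hV => by
            rcases Set.mem_insert_iff.mp hV with h | h
            · rw [h]; exact h𝒮 U hU
            · exact h𝒮 V (hF₀𝒮 h))
          ⟨U, Set.mem_insert U F₀⟩) X inferInstance
        have ht'le : t' ≤ S₀ := hS₀max t'
          (fun V hV => ht'1 V (Set.mem_insert_of_mem U hV))
        have ht'𝒜 : t' ∈ 𝒜 := ⟨insert U F₀, ⟨U, Set.mem_insert U F₀⟩,
          hF₀fin.insert U, Set.insert_subset hU hF₀𝒮, ht'1, ht'2⟩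
        have : t' = S₀ := by
          by_contra hne
          exact hS₀min t' ht'𝒜 (lt_of_le_of_ne ht'le hne)
        rw [← this]
        exact ht'1 U (Set.mem_insert U F₀)
      have hS₀T := hsub (fun U hU => hS₀all U hU)
      have hS₀bot : S₀ = ⊥ := by
        have hzero := hS₀T.2 S₀.subtype
        rw [Submodule.eq_bot_iff]
        intro x hx
        have := LinearMap.congr_fun hzero ⟨x, hx⟩
        simpa using this
      refine ⟨F₀, hF₀𝒮, hF₀fin, ?_⟩
      intro Y hY
      obtain ⟨U₁, hU₁⟩ := hF₀ne
      refine ⟨(h𝒮 U₁ (hF₀𝒮 hU₁)).1 Y (hY U₁ hU₁), fun f => ?_⟩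
      have hrange : ModuleCat.of A (LinearMap.range f) ∈ ⋂₀ F₀ := fun U hU =>
        (h𝒮 U (hF₀𝒮 hU)).2.2.2.1 Y (ModuleCat.of A (LinearMap.range f)) f.rangeRestrict
          f.surjective_rangeRestrict (hY U hU)
      have : LinearMap.range f ≤ S₀ := hS₀max _ hrange
      rw [hS₀bot, le_bot_iff] at this
      exact LinearMap.range_eq_bot.mp this
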